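/- (Power-Law ULE implies power-law dynamical localization.) Let (φ_m)_{m∈ℤ} be an orthonormal (Hilbert) basis of ℓ²(ℤ), let λ : ℤ → ℝ, let q ≥ 0, α > 3/2 + q/2, and γ_α > 0, and assume |φ_m(n)| ≤ γ_α / |n − m|^α for all m, n ∈ ℤ with m ≠ n. Then for every k ∈ ℤ there exists a constant C (depending on q, α, γ_α and k) such that for all t ∈ ℝ: Σ_{n∈ℤ} |n|^q · |Σ_{m∈ℤ} e^{−i t λ(m)} · conj(φ_m(k)) · φ_m(n)|² ≤ C. -/

import Mathlib

noncomputable section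

open scoped BigOperators ComplexConjugate
open ENNReal

set_option maxHeartbeats 2000000 in
lemma my_summable_rpow {s : ℝ} (hs : 1 < s) :
    Summable (fun j : ℤ => (1 + |(j:ℝ)|) ^ (-s)) := by
  have hnat : Summable (fun n : ℕ => (1 + |((n:ℤ):ℝ)|) ^ (-s)) := by
    have h1 : Summable (fun n : ℕ => (((n:ℝ)) ^ s)⁻¹) :=
      Real.summable_nat_rpow_inv.2 hs
    have h2 : Summable (fun n : ℕ => (((n+1:ℕ):ℝ) ^ s)⁻¹) :=
      (summable_nat_add_iff 1).2 h1
    apply h2.of_nonneg_of_le (fun n => by positivity)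
    intro n
    have hcast : |((n:ℤ):ℝ)| = (n:ℝ) := by simp [abs_of_nonneg]
    rw [hcast, Real.rpow_neg (by positivity)]
    rw [inv_le_inv₀ (by positivity) (by positivity)]
    apply Real.rpow_le_rpow (by positivity) _ (le_of_lt (lt_trans one_pos hs))
    push_cast; linarith
  apply hnat.of_nat_of_neg
  apply hnat.congr
  intro n; simp

lemma my_tsum_ne_top {s : ℝ} (hs : 1 < s) :
    ∑' j : ℤ, ENNReal.ofReal ((1 + |(j:ℝ)|) ^ (-s)) ≠ ∞ := by
  rw [← ENNReal.ofReal_tsum_of_nonneg (fun j => by positivity) (my_summable_rpow hs)]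
  exact ENNReal.ofReal_ne_top

lemma my_submult (x y : ℝ) : 1 + |x| ≤ (1 + |x - y|) * (1 + |y|) := by
  have h2 : |x| - |y| ≤ |x - y| := abs_sub_abs_le_abs_sub x y
  have h3 := abs_nonneg (x - y)
  have h4 := abs_nonneg y
  nlinarith

lemma my_amgm (a b : ℝ≥0∞) : a * b ≤ a ^ 2 + b ^ 2 := by
  rcases le_total a b with h | h
  · calc a * b ≤ b * b := mul_le_mul_left h _
      _ = b ^ 2 := (sq b).symm
      _ ≤ a ^ 2 + b ^ 2 := le_add_self
  · calc a * b ≤ a * a := mul_le_mul_right h _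
      _ = a ^ 2 := (sq a).symm
      _ ≤ a ^ 2 + b ^ 2 := le_self_add

lemma my_tsum_shift (f : ℤ → ℝ≥0∞) (m : ℤ) : ∑' n : ℤ, f (n - m) = ∑' j : ℤ, f j :=
  (Equiv.subRight m).tsum_eq f

set_option maxHeartbeats 1000000 in
lemma my_core (q α β : ℝ) (hq : 0 ≤ q) (hβ : 1 ≤ β)
    (n m l k : ℝ) :
    (1 + |n|) ^ q *
      ((β * (1 + |k - m|) ^ (-α)) * (β * (1 + |n - m|) ^ (-α)) *
       ((β * (1 + |k - l|) ^ (-α)) * (β * (1 + |n - l|) ^ (-α)))) ≤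
    (β ^ 2 * (1 + |k|) ^ (q / 2) * (1 + |m - k|) ^ (q / 2 - α)) *
      ((β ^ 2 * (1 + |k|) ^ (q / 2) * (1 + |l - k|) ^ (q / 2 - α)) *
       ((1 + |n - m|) ^ (q / 2 - α) * (1 + |n - l|) ^ (q / 2 - α))) := by
  set A := 1 + |n - m| with hA
  set A' := 1 + |n - l| with hA'
  set B := 1 + |m - k| with hB
  set B' := 1 + |l - k| with hB'
  set K := 1 + |k| with hK
  set N := 1 + |n| with hN
  have hApos : 0 < A := by positivity
  have hA'pos : 0 < A' := by positivity
  have hBpos : 0 < B := by positivity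
  have hB'pos : 0 < B' := by positivity
  have hKpos : 0 < K := by positivity
  have hNpos : 0 < N := by positivity
  have habs1 : |k - m| = |m - k| := abs_sub_comm k m
  have habs2 : |k - l| = |l - k| := abs_sub_comm k l
  rw [habs1, habs2]
  have h1 : N ≤ A * B * K := by
    calc N ≤ A * (1 + |m|) := my_submult n m
      _ ≤ A * (B * K) := mul_le_mul_of_nonneg_left (my_submult m k) hApos.le
      _ = A * B * K := by ring
  have h2 : N ≤ A' * B' * K := by
    calc N ≤ A' * (1 + |l|) := my_submult n l
      _ ≤ A' * (B' * K) := mul_le_mul_of_nonneg_left (my_submult l k) hA'pos.le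
      _ = A' * B' * K := by ring
  have hP1 : N ^ (q/2) ≤ A ^ (q/2) * B ^ (q/2) * K ^ (q/2) := by
    calc N ^ (q/2) ≤ (A * B * K) ^ (q/2) :=
          Real.rpow_le_rpow hNpos.le h1 (by linarith)
      _ = A ^ (q/2) * B ^ (q/2) * K ^ (q/2) := by
          rw [Real.mul_rpow (by positivity) hKpos.le,
            Real.mul_rpow hApos.le hBpos.le]
  have hP2 : N ^ (q/2) ≤ A' ^ (q/2) * B' ^ (q/2) * K ^ (q/2) := by
    calc N ^ (q/2) ≤ (A' * B' * K) ^ (q/2) :=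
          Real.rpow_le_rpow hNpos.le h2 (by linarith)
      _ = A' ^ (q/2) * B' ^ (q/2) * K ^ (q/2) := by
          rw [Real.mul_rpow (by positivity) hKpos.le,
            Real.mul_rpow hA'pos.le hB'pos.le]
  have hsplit : ∀ x : ℝ, 0 < x → x ^ (q/2 - α) = x ^ (q/2) * x ^ (-α) := by
    intro x hx
    rw [← Real.rpow_add hx]; ring_nf
  have hNq : N ^ q = N ^ (q/2) * N ^ (q/2) := by
    rw [← Real.rpow_add hNpos]; ring_nf
  rw [hsplit A hApos, hsplit A' hA'pos, hsplit B hBpos, hsplit B' hB'pos, hNq]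
  have key : (N ^ (q/2) * N ^ (q/2)) *
      ((β * B ^ (-α)) * (β * A ^ (-α)) * ((β * B' ^ (-α)) * (β * A' ^ (-α)))) ≤
      ((A ^ (q/2) * B ^ (q/2) * K ^ (q/2)) * (A' ^ (q/2) * B' ^ (q/2) * K ^ (q/2))) *
      ((β * B ^ (-α)) * (β * A ^ (-α)) * ((β * B' ^ (-α)) * (β * A' ^ (-α)))) := by
    apply mul_le_mul_of_nonneg_right _ (by positivity)
    apply mul_le_mul hP1 hP2 (by positivity) (by positivity)
  calc (N ^ (q/2) * N ^ (q/2)) *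
      ((β * B ^ (-α)) * (β * A ^ (-α)) * ((β * B' ^ (-α)) * (β * A' ^ (-α)))) ≤
      ((A ^ (q/2) * B ^ (q/2) * K ^ (q/2)) * (A' ^ (q/2) * B' ^ (q/2) * K ^ (q/2))) *
      ((β * B ^ (-α)) * (β * A ^ (-α)) * ((β * B' ^ (-α)) * (β * A' ^ (-α)))) := key
    _ = β ^ 2 * K ^ (q/2) * (B ^ (q/2) * B ^ (-α)) *
        (β ^ 2 * K ^ (q/2) * (B' ^ (q/2) * B' ^ (-α)) *
          (A ^ (q/2) * A ^ (-α) * (A' ^ (q/2) * A' ^ (-α)))) := by ring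

abbrev ℓ2 : Type := lp (fun _ : ℤ => ℂ) 2

set_option maxHeartbeats 4000000 in
theorem stmt_5
    (φ : ℤ → ℓ2)
    (hON : Orthonormal ℂ φ)
    (hcomplete : (Submodule.span ℂ (Set.range φ)).topologicalClosure = ⊤)
    (lam : ℤ → ℝ)
    (q : ℝ) (hq : 0 ≤ q)
    (α : ℝ) (hα : 3 / 2 + q / 2 < α)
    (γα : ℝ) (hγα : 0 < γα)
    (hULE : ∀ m n : ℤ, m ≠ n →
      ‖(φ m : ∀ _ : ℤ, ℂ) n‖ ≤ γα / (|n - m| : ℝ) ^ α) :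
    ∀ k : ℤ, ∃ C : ℝ, ∀ t : ℝ,
      Summable (fun n : ℤ => (|n| : ℝ) ^ q *
        ‖∑' m : ℤ, Complex.exp (-(Complex.I * t * lam m)) *
          conj ((φ m : ∀ _ : ℤ, ℂ) k) * (φ m : ∀ _ : ℤ, ℂ) n‖ ^ 2) ∧
      (∑' n : ℤ, (|n| : ℝ) ^ q *
        ‖∑' m : ℤ, Complex.exp (-(Complex.I * t * lam m)) *
          conj ((φ m : ∀ _ : ℤ, ℂ) k) * (φ m : ∀ _ : ℤ, ℂ) n‖ ^ 2) ≤ C := by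
  intro k
  have hα0 : (0:ℝ) < α := by linarith
  have hα1 : (1:ℝ) < α := by linarith
  set β : ℝ := max 1 γα * 2 ^ α with hβdef
  have h2α : (1:ℝ) ≤ (2:ℝ) ^ α := by
    rw [show (1:ℝ) = (2:ℝ) ^ (0:ℝ) by rw [Real.rpow_zero]]
    exact Real.rpow_le_rpow_left_iff (by norm_num) |>.2 hα0.le
  have hβ1 : (1:ℝ) ≤ β := by
    calc (1:ℝ) = 1 * 1 := by ring
      _ ≤ max 1 γα * 2 ^ α := by
          apply mul_le_mul (le_max_left _ _) h2α one_pos.le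
          exact le_trans one_pos.le (le_max_left _ _)
  have hβ0 : (0:ℝ) < β := lt_of_lt_of_le one_pos hβ1
  -- coordinate bound
  have hcoord : ∀ m n : ℤ, ‖(φ m : ∀ _ : ℤ, ℂ) n‖ ≤ β * (1 + |((n - m : ℤ):ℝ)|) ^ (-α) := by
    intro m n
    by_cases hmn : n = m
    · subst hmn
      have h1 : ‖(φ n : ∀ _ : ℤ, ℂ) n‖ ≤ ‖φ n‖ :=
        lp.norm_apply_le_norm (by norm_num) (φ n) n
      rw [hON.1 n] at h1
      simpa using le_trans h1 hβ1
    · have h1 := hULE m n (fun hh => hmn hh.symm)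
      refine le_trans h1 ?_
      have hc : ((n - m : ℤ):ℝ) = (n:ℝ) - (m:ℝ) := by push_cast; ring
      rw [hc]
      set a : ℝ := |(n:ℝ) - (m:ℝ)| with ha
      have hj : (1:ℝ) ≤ a := by
        have h0 : (1:ℤ) ≤ |n - m| := Int.one_le_abs (sub_ne_zero.2 hmn)
        calc (1:ℝ) ≤ ((|n - m| : ℤ) : ℝ) := by exact_mod_cast h0
          _ = a := by rw [ha]; push_cast; ring
      have ha0 : (0:ℝ) < a := lt_of_lt_of_le one_pos hj
      rw [Real.rpow_neg (by positivity), ← div_eq_mul_inv,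
        div_le_div_iff₀ (by positivity) (by positivity)]
      have h1a : (1 + a) ^ α ≤ 2 ^ α * a ^ α := by
        rw [← Real.mul_rpow (by norm_num) ha0.le]
        exact Real.rpow_le_rpow (by positivity) (by linarith) hα0.le
      calc γα * (1 + a) ^ α ≤ γα * (2 ^ α * a ^ α) :=
            mul_le_mul_of_nonneg_left h1a hγα.le
        _ ≤ max 1 γα * 2 ^ α * a ^ α := by
            rw [← mul_assoc]
            apply mul_le_mul_of_nonneg_right _ (by positivity)
            exact mul_le_mul_of_nonneg_right (le_max_right _ _) (by positivity)
        _ = β * a ^ α := by rw [hβdef]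
  -- real weights
  set g : ℤ → ℝ := fun m => β * (1 + |((k - m : ℤ):ℝ)|) ^ (-α) with hgdef
  set h : ℤ → ℤ → ℝ := fun n m => β * (1 + |((n - m : ℤ):ℝ)|) ^ (-α) with hhdef
  set w : ℤ → ℤ → ℝ := fun n m => g m * h n m with hwdef
  have hgpos : ∀ m, 0 < g m := fun m => by
    rw [hgdef]; positivity
  have hhpos : ∀ n m, 0 < h n m := fun n m => by
    rw [hhdef]; positivity
  have hh_le : ∀ n m, h n m ≤ β := by
    intro n m
    rw [hhdef]
    calc β * (1 + |((n - m : ℤ):ℝ)|) ^ (-α) ≤ β * 1 := by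
          apply mul_le_mul_of_nonneg_left _ hβ0.le
          apply Real.rpow_le_one_of_one_le_of_nonpos
          · have := abs_nonneg ((n - m : ℤ):ℝ); linarith
          · linarith
      _ = β := mul_one β
  have hg_sum : Summable g := by
    have h0 : Summable (fun j : ℤ => (1 + |(j:ℝ)|) ^ (-α)) := my_summable_rpow hα1
    have h1 : Summable (fun m : ℤ => (1 + |((k - m : ℤ):ℝ)|) ^ (-α)) := by
      have hinj : Function.Injective (fun m : ℤ => k - m) := by
        intro a b hab
        simpa using hab
      have := h0.comp_injective hinj
      exact this.congr (fun m => by simp [Function.comp])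
    exact h1.mul_left β
  have hw_sum : ∀ n, Summable (w n) := by
    intro n
    apply (hg_sum.mul_right β).of_nonneg_of_le
      (fun m => le_of_lt (mul_pos (hgpos m) (hhpos n m)))
    intro m
    exact mul_le_mul_of_nonneg_left (hh_le n m) (hgpos m).le
  -- ENNReal constants
  set D : ℝ≥0∞ := ∑' j : ℤ, ENNReal.ofReal ((1 + |(j:ℝ)|) ^ (-(2*α - q))) with hDdef
  set E : ℝ≥0∞ := ∑' j : ℤ, ENNReal.ofReal ((1 + |(j:ℝ)|) ^ (-(α - q/2))) with hEdef
  have hDfin : D ≠ ∞ := my_tsum_ne_top (by linarith)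
  have hEfin : E ≠ ∞ := my_tsum_ne_top (by linarith)
  set κ : ℝ := β ^ 2 * (1 + |(k:ℝ)|) ^ (q/2) with hκdef
  have hκ0 : 0 ≤ κ := by rw [hκdef]; positivity
  set C' : ℝ≥0∞ := (ENNReal.ofReal κ * E) * ((ENNReal.ofReal κ * E) * (D + D)) with hC'def
  have hC'fin : C' ≠ ∞ := by
    rw [hC'def]
    apply ENNReal.mul_ne_top (ENNReal.mul_ne_top ENNReal.ofReal_ne_top hEfin)
    exact ENNReal.mul_ne_top (ENNReal.mul_ne_top ENNReal.ofReal_ne_top hEfin)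
      (ENNReal.add_ne_top.2 ⟨hDfin, hDfin⟩)
  refine ⟨C'.toReal, ?_⟩
  intro t
  set F : ℤ → ℝ := fun n => (|n| : ℝ) ^ q *
    ‖∑' m : ℤ, Complex.exp (-(Complex.I * t * lam m)) *
      conj ((φ m : ∀ _ : ℤ, ℂ) k) * (φ m : ∀ _ : ℤ, ℂ) n‖ ^ 2 with hFdef
  have hFnonneg : ∀ n, 0 ≤ F n := by
    intro n; rw [hFdef]
    apply mul_nonneg (Real.rpow_nonneg (by positivity) q)
    positivity
  -- norm of exp factor
  have hexp : ∀ m : ℤ, ‖Complex.exp (-(Complex.I * t * lam m))‖ = 1 := by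
    intro m
    rw [Complex.norm_exp]
    norm_num [Complex.mul_re]
  -- termwise bound
  have hterm : ∀ n m : ℤ, ‖Complex.exp (-(Complex.I * t * lam m)) *
      conj ((φ m : ∀ _ : ℤ, ℂ) k) * (φ m : ∀ _ : ℤ, ℂ) n‖ ≤ w n m := by
    intro n m
    rw [norm_mul, norm_mul, hexp m, one_mul, RCLike.norm_conj]
    rw [hwdef]
    exact mul_le_mul (hcoord m k) (hcoord m n) (norm_nonneg _) (hgpos m).le
  -- step A
  have hS : ∀ n : ℤ, ‖∑' m : ℤ, Complex.exp (-(Complex.I * t * lam m)) *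
      conj ((φ m : ∀ _ : ℤ, ℂ) k) * (φ m : ∀ _ : ℤ, ℂ) n‖ ≤ ∑' m, w n m := by
    intro n
    have hts : Summable (fun m : ℤ => ‖Complex.exp (-(Complex.I * t * lam m)) *
        conj ((φ m : ∀ _ : ℤ, ℂ) k) * (φ m : ∀ _ : ℤ, ℂ) n‖) :=
      (hw_sum n).of_nonneg_of_le (fun m => norm_nonneg _) (hterm n)
    exact (norm_tsum_le_tsum_norm hts).trans
      (Summable.tsum_le_tsum (hterm n) hts (hw_sum n))
  -- ENNReal quantities
  set N : ℤ → ℝ≥0∞ := fun n => ENNReal.ofReal ((1 + |(n:ℝ)|) ^ q) with hNdef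
  set W : ℤ → ℤ → ℝ≥0∞ := fun n m => ENNReal.ofReal (w n m) with hWdef
  set G' : ℤ → ℝ≥0∞ := fun m =>
    ENNReal.ofReal (κ * (1 + |((m - k : ℤ):ℝ)|) ^ (q/2 - α)) with hG'def
  set X : ℤ → ℤ → ℝ≥0∞ := fun n m =>
    ENNReal.ofReal ((1 + |((n - m : ℤ):ℝ)|) ^ (q/2 - α)) with hXdef
  -- step B
  have hB : ∀ n : ℤ, ENNReal.ofReal (F n) ≤ N n * (∑' m, W n m) ^ 2 := by
    intro n
    rw [hFdef]
    rw [ENNReal.ofReal_mul (Real.rpow_nonneg (by positivity) q)]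
    apply mul_le_mul'
    · apply ENNReal.ofReal_le_ofReal
      apply Real.rpow_le_rpow (by positivity) _ hq
      push_cast
      have := abs_nonneg ((n:ℝ)); linarith
    · rw [ENNReal.ofReal_pow (norm_nonneg _)]
      apply pow_le_pow_left' _ 2
      calc ENNReal.ofReal ‖_‖ ≤ ENNReal.ofReal (∑' m, w n m) :=
            ENNReal.ofReal_le_ofReal (hS n)
        _ = ∑' m, W n m := by
            rw [ENNReal.ofReal_tsum_of_nonneg
              (fun m => (mul_pos (hgpos m) (hhpos n m)).le) (hw_sum n)]
  -- pointwise core in ENNReal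
  have hptwise : ∀ n m l : ℤ, N n * (W n m * W n l) ≤
      G' m * (G' l * (X n m * X n l)) := by
    intro n m l
    have hwnm : 0 ≤ w n m := (mul_pos (hgpos m) (hhpos n m)).le
    have hwnl : 0 ≤ w n l := (mul_pos (hgpos l) (hhpos n l)).le
    have hcore := my_core q α β hq hβ1 (n:ℝ) (m:ℝ) (l:ℝ) (k:ℝ)
    calc N n * (W n m * W n l)
        = ENNReal.ofReal ((1 + |(n:ℝ)|) ^ q * (w n m * w n l)) := by
          rw [hNdef, hWdef]
          rw [ENNReal.ofReal_mul (Real.rpow_nonneg (by positivity) q),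
            ENNReal.ofReal_mul hwnm]
      _ ≤ ENNReal.ofReal
          ((κ * (1 + |((m - k : ℤ):ℝ)|) ^ (q / 2 - α)) *
            ((κ * (1 + |((l - k : ℤ):ℝ)|) ^ (q / 2 - α)) *
              ((1 + |((n - m : ℤ):ℝ)|) ^ (q / 2 - α) *
                (1 + |((n - l : ℤ):ℝ)|) ^ (q / 2 - α)))) := by
          apply ENNReal.ofReal_le_ofReal
          rw [hwdef, hgdef, hhdef, hκdef]
          simp only
          push_cast
          calc (1 + |(n:ℝ)|) ^ q *
              (β * (1 + |(k:ℝ) - (m:ℝ)|) ^ (-α) * (β * (1 + |(n:ℝ) - (m:ℝ)|) ^ (-α)) *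
                (β * (1 + |(k:ℝ) - (l:ℝ)|) ^ (-α) * (β * (1 + |(n:ℝ) - (l:ℝ)|) ^ (-α)))) ≤
              β ^ 2 * (1 + |(k:ℝ)|) ^ (q / 2) * (1 + |(m:ℝ) - (k:ℝ)|) ^ (q / 2 - α) *
                (β ^ 2 * (1 + |(k:ℝ)|) ^ (q / 2) * (1 + |(l:ℝ) - (k:ℝ)|) ^ (q / 2 - α) *
                  ((1 + |(n:ℝ) - (m:ℝ)|) ^ (q / 2 - α) *
                    (1 + |(n:ℝ) - (l:ℝ)|) ^ (q / 2 - α))) := hcore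
            _ = β ^ 2 * (1 + |(k:ℝ)|) ^ (q / 2) * (1 + |(m:ℝ) - (k:ℝ)|) ^ (q / 2 - α) *
                (β ^ 2 * (1 + |(k:ℝ)|) ^ (q / 2) * (1 + |(l:ℝ) - (k:ℝ)|) ^ (q / 2 - α) *
                  ((1 + |(n:ℝ) - (m:ℝ)|) ^ (q / 2 - α) *
                    (1 + |(n:ℝ) - (l:ℝ)|) ^ (q / 2 - α))) := rfl
      _ = G' m * (G' l * (X n m * X n l)) := by
          rw [hG'def, hXdef]
          simp only
          rw [ENNReal.ofReal_mul (mul_nonneg hκ0 (Real.rpow_nonneg (by positivity) _)),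
            ENNReal.ofReal_mul (mul_nonneg hκ0 (Real.rpow_nonneg (by positivity) _)),
            ENNReal.ofReal_mul (Real.rpow_nonneg (by positivity) _)]
  -- square of tsum expansion
  have hexpand : ∀ n : ℤ, N n * (∑' m, W n m) ^ 2 =
      ∑' m : ℤ, ∑' l : ℤ, N n * (W n m * W n l) := by
    intro n
    rw [sq, ← ENNReal.tsum_mul_right, ← ENNReal.tsum_mul_left]
    refine tsum_congr fun m => ?_
    rw [← ENNReal.tsum_mul_left, ← ENNReal.tsum_mul_left]
  -- sum of X^2 over n
  have hXsq : ∀ m : ℤ, (∑' n : ℤ, X n m ^ 2) = D := by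
    intro m
    have hx : ∀ n : ℤ, X n m ^ 2 =
        (fun j : ℤ => ENNReal.ofReal ((1 + |(j:ℝ)|) ^ (-(2*α - q)))) (n - m) := by
      intro n
      rw [hXdef]
      simp only
      rw [← ENNReal.ofReal_pow (Real.rpow_nonneg (by positivity) _)]
      congr 1
      have hgen : ∀ x : ℝ, 0 ≤ x → (x ^ (q/2 - α)) ^ (2:ℕ) = x ^ (-(2*α - q)) := by
        intro x hx
        rw [← Real.rpow_natCast (x ^ (q/2 - α)) 2, ← Real.rpow_mul hx]
        congr 1
        push_cast
        ring
      exact hgen _ (by positivity)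
    rw [tsum_congr hx, hDdef]
    exact my_tsum_shift (fun j : ℤ => ENNReal.ofReal ((1 + |(j:ℝ)|) ^ (-(2*α - q)))) m
  -- sum of G'
  have hG'sum : (∑' m : ℤ, G' m) = ENNReal.ofReal κ * E := by
    have hx : ∀ m : ℤ, G' m = ENNReal.ofReal κ *
        (fun j : ℤ => ENNReal.ofReal ((1 + |(j:ℝ)|) ^ (-(α - q/2)))) (m - k) := by
      intro m
      rw [hG'def]
      simp only
      rw [ENNReal.ofReal_mul hκ0]
      congr 2
      ring
    rw [tsum_congr hx, ENNReal.tsum_mul_left, hEdef]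
    exact congrArg (ENNReal.ofReal κ * ·)
      (my_tsum_shift (fun j : ℤ => ENNReal.ofReal ((1 + |(j:ℝ)|) ^ (-(α - q/2)))) k)
  -- the main estimate
  have hmain : (∑' n : ℤ, ENNReal.ofReal (F n)) ≤ C' := by
    calc (∑' n : ℤ, ENNReal.ofReal (F n))
        ≤ ∑' n : ℤ, N n * (∑' m, W n m) ^ 2 := ENNReal.tsum_le_tsum hB
      _ = ∑' n : ℤ, ∑' m : ℤ, ∑' l : ℤ, N n * (W n m * W n l) := tsum_congr hexpand
      _ = ∑' m : ℤ, ∑' n : ℤ, ∑' l : ℤ, N n * (W n m * W n l) := ENNReal.tsum_comm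
      _ = ∑' m : ℤ, ∑' l : ℤ, ∑' n : ℤ, N n * (W n m * W n l) :=
          tsum_congr fun m => ENNReal.tsum_comm
      _ ≤ ∑' m : ℤ, ∑' l : ℤ, ∑' n : ℤ, G' m * (G' l * (X n m * X n l)) :=
          ENNReal.tsum_le_tsum fun m => ENNReal.tsum_le_tsum fun l =>
            ENNReal.tsum_le_tsum fun n => hptwise n m l
      _ = ∑' m : ℤ, ∑' l : ℤ, G' m * (G' l * ∑' n : ℤ, X n m * X n l) := by
          refine tsum_congr fun m => tsum_congr fun l => ?_
          rw [ENNReal.tsum_mul_left, ENNReal.tsum_mul_left]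
      _ ≤ ∑' m : ℤ, ∑' l : ℤ, G' m * (G' l * (D + D)) := by
          refine ENNReal.tsum_le_tsum fun m => ENNReal.tsum_le_tsum fun l => ?_
          refine mul_le_mul_right (mul_le_mul_right ?_ _) _
          calc (∑' n : ℤ, X n m * X n l) ≤ ∑' n : ℤ, (X n m ^ 2 + X n l ^ 2) :=
                ENNReal.tsum_le_tsum fun n => my_amgm _ _
            _ = (∑' n : ℤ, X n m ^ 2) + (∑' n : ℤ, X n l ^ 2) := ENNReal.tsum_add
            _ = D + D := by rw [hXsq m, hXsq l]
      _ = (∑' m : ℤ, G' m) * ((∑' l : ℤ, G' l) * (D + D)) := by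
          calc (∑' m : ℤ, ∑' l : ℤ, G' m * (G' l * (D + D)))
              = ∑' m : ℤ, G' m * ((∑' l : ℤ, G' l) * (D + D)) := by
                refine tsum_congr fun m => ?_
                rw [ENNReal.tsum_mul_left, ENNReal.tsum_mul_right]
            _ = (∑' m : ℤ, G' m) * ((∑' l : ℤ, G' l) * (D + D)) :=
                ENNReal.tsum_mul_right
      _ = C' := by rw [hG'sum, hC'def]
  have hne : (∑' n : ℤ, ENNReal.ofReal (F n)) ≠ ∞ :=
    (lt_of_le_of_lt hmain (lt_top_iff_ne_top.2 hC'fin)).ne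
  have hsumm : Summable F := by
    have h1 := ENNReal.summable_toReal hne
    exact h1.congr fun n => ENNReal.toReal_ofReal (hFnonneg n)
  refine ⟨hsumm, ?_⟩
  have heq : ENNReal.ofReal (∑' n : ℤ, F n) = ∑' n : ℤ, ENNReal.ofReal (F n) :=
    ENNReal.ofReal_tsum_of_nonneg hFnonneg hsumm
  have hfin : ENNReal.ofReal (∑' n : ℤ, F n) ≤ C' := heq ▸ hmain
  exact (ENNReal.ofReal_le_iff_le_toReal hC'fin).1 hfin
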